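/- Let 0 < α < 1, B > 0, T > 0 and let m be a positive integer with mα > 2. Then the function z(t) = ∑_{n=m+1}^∞ (−B)^n t^{αn} / Γ(αn + 1) is twice differentiable at every t ∈ (0,T], and its second derivative is given by the termwise differentiated series z''(t) = ∑_{n=m+1}^∞ (−B)^n t^{αn−2} / Γ(αn − 1). -/

import Mathlib

lemma gamma_lb (R : ℝ) (hR : 1 ≤ R) : ∀ x : ℝ, R + 1 ≤ x → R ^ (x - R - 2) ≤ Real.Gamma x := by
  have hR0 : (0:ℝ) < R := lt_of_lt_of_le one_pos hR
  have base : ∀ x : ℝ, 2 ≤ x → (1:ℝ) ≤ Real.Gamma x := by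
    intro x hx
    rcases eq_or_lt_of_le hx with h | h
    · rw [← h, Real.Gamma_two]
    · have := Real.Gamma_strictMonoOn_Ici (Set.mem_Ici.mpr (le_refl (2:ℝ)))
        (Set.mem_Ici.mpr hx) h
      rw [Real.Gamma_two] at this; exact this.le
  have aux : ∀ n : ℕ, ∀ x : ℝ, R + 1 ≤ x → x ≤ R + 2 + n → R ^ (x - R - 2) ≤ Real.Gamma x := by
    intro n
    induction n with
    | zero =>
      intro x hx1 hx2
      push_cast at hx2
      have h1 : x - R - 2 ≤ 0 := by linarith
      calc R ^ (x - R - 2) ≤ 1 := Real.rpow_le_one_of_one_le_of_nonpos hR h1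
        _ ≤ Real.Gamma x := base x (by linarith)
    | succ n ih =>
      intro x hx1 hx2
      by_cases hc : x ≤ R + 2 + n
      · exact ih x hx1 hc
      push_neg at hc
      have hn0 : (0:ℝ) ≤ n := n.cast_nonneg
      have hx1' : R + 1 ≤ x - 1 := by linarith
      have hx2' : x - 1 ≤ R + 2 + n := by push_cast at hx2; linarith
      have hne : x - 1 ≠ 0 := ne_of_gt (by linarith : (0:ℝ) < x - 1)
      have hΓ : Real.Gamma x = (x - 1) * Real.Gamma (x - 1) := by
        have h := Real.Gamma_add_one hne
        rw [sub_add_cancel] at h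
        exact h
      have hsplit : x - R - 2 = (x - 1 - R - 2) + 1 := by ring
      rw [hsplit, Real.rpow_add_one hR0.ne']
      calc R ^ (x - 1 - R - 2) * R
          ≤ Real.Gamma (x - 1) * (x - 1) :=
            mul_le_mul (ih (x - 1) hx1' hx2') (by linarith)
              hR0.le (Real.Gamma_pos_of_pos (by linarith)).le
        _ = Real.Gamma x := by rw [hΓ]; ring
  intro x hx
  obtain ⟨n, hn⟩ := exists_nat_ge x
  exact aux n x hx (by linarith)

lemma summable_tail (α C d : ℝ) (m : ℕ) (hα : 0 < α) (hC : 0 < C)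
    (hd : ∀ n : ℕ, 0 < α * ((m : ℝ) + 1 + n) + d) :
    Summable (fun n : ℕ => C ^ (m + 1 + n) / Real.Gamma (α * ((m : ℝ) + 1 + n) + d)) := by
  set R : ℝ := max 1 ((2 * C) ^ α⁻¹) with hRdef
  have hR : (1:ℝ) ≤ R := le_max_left _ _
  have hR0 : (0:ℝ) < R := lt_of_lt_of_le one_pos hR
  have hRα : 2 * C ≤ R ^ α := by
    calc 2 * C = ((2 * C) ^ α⁻¹) ^ α := by
          rw [← Real.rpow_mul (by positivity : (0:ℝ) ≤ 2 * C), inv_mul_cancel₀ hα.ne',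
            Real.rpow_one]
        _ ≤ R ^ α := Real.rpow_le_rpow (by positivity) (le_max_right _ _) hα.le
  set K : ℝ := R ^ (R + 2 - d) with hKdef
  have hK0 : (0:ℝ) < K := Real.rpow_pos_of_pos hR0 _
  obtain ⟨N, hN⟩ := exists_nat_ge ((R + 1 - d) / α)
  rw [← summable_nat_add_iff N]
  have key : ∀ n : ℕ,
      C ^ (m + 1 + (n + N)) / Real.Gamma (α * ((m : ℝ) + 1 + ↑(n + N)) + d)
        ≤ K * (1 / 2) ^ n := by
    intro n
    set k : ℕ := m + 1 + (n + N) with hkdef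
    have hkcast : (m : ℝ) + 1 + ↑(n + N) = (k : ℝ) := by push_cast [hkdef]; ring
    rw [hkcast]
    set x : ℝ := α * (k : ℝ) + d with hxdef
    have hkN : (N : ℝ) ≤ (k : ℝ) := by
      have : N ≤ k := by omega
      exact_mod_cast this
    have hxge : R + 1 ≤ x := by
      have h1 : R + 1 - d ≤ α * N := by
        rw [div_le_iff₀ hα] at hN; linarith [hN]
      have h2 : α * (N : ℝ) ≤ α * (k : ℝ) := by nlinarith
      simp only [hxdef]; linarith
    have hΓlb : R ^ (x - R - 2) ≤ Real.Gamma x := gamma_lb R hR x hxge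
    have hΓpos : (0:ℝ) < Real.Gamma x := Real.Gamma_pos_of_pos (by linarith)
    have hRx : R ^ (x - R - 2) = R ^ (α * (k:ℝ)) / K := by
      rw [hKdef, ← Real.rpow_sub hR0]
      congr 1
      simp only [hxdef]; ring
    have hRk : (2 * C) ^ k ≤ R ^ (α * (k:ℝ)) := by
      calc (2 * C) ^ k ≤ (R ^ α) ^ k := pow_le_pow_left₀ (by positivity) hRα k
        _ = R ^ (α * (k:ℝ)) := by
            rw [← Real.rpow_natCast (R ^ α) k, ← Real.rpow_mul hR0.le]
    have hΓlb2 : (2 * C) ^ k / K ≤ Real.Gamma x := by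
      refine le_trans ?_ hΓlb
      rw [hRx]
      gcongr
    have heq : C ^ k / ((2 * C) ^ k / K) = K * (1 / 2) ^ k := by
      rw [mul_pow]
      field_simp
      rw [← mul_pow]; norm_num
    calc C ^ k / Real.Gamma x
        ≤ C ^ k / ((2 * C) ^ k / K) := by
          apply div_le_div_of_nonneg_left (by positivity) (by positivity) hΓlb2
      _ = K * (1 / 2) ^ k := heq
      _ ≤ K * (1 / 2) ^ n :=
          mul_le_mul_of_nonneg_left
            (pow_le_pow_of_le_one (by norm_num) (by norm_num) (show n ≤ k by omega)) hK0.le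
  refine Summable.of_nonneg_of_le (fun n => ?_) key
    ((summable_geometric_two).mul_left K)
  exact div_nonneg (pow_nonneg hC.le _) (Real.Gamma_pos_of_pos (hd (n + N))).le

noncomputable def mlF (α B : ℝ) (m n : ℕ) (x : ℝ) : ℝ :=
  (-B) ^ (m + 1 + n) * x ^ (α * ((m : ℝ) + 1 + n)) / Real.Gamma (α * ((m : ℝ) + 1 + n) + 1)

noncomputable def mlG (α B : ℝ) (m n : ℕ) (x : ℝ) : ℝ :=
  (-B) ^ (m + 1 + n) * x ^ (α * ((m : ℝ) + 1 + n) - 1) / Real.Gamma (α * ((m : ℝ) + 1 + n))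

noncomputable def mlH (α B : ℝ) (m n : ℕ) (x : ℝ) : ℝ :=
  (-B) ^ (m + 1 + n) * x ^ (α * ((m : ℝ) + 1 + n) - 2) / Real.Gamma (α * ((m : ℝ) + 1 + n) - 1)

lemma mlF_hasDeriv (α B : ℝ) (m n : ℕ) (y : ℝ) (hy : 0 < y)
    (hc : 2 < α * ((m : ℝ) + 1 + n)) :
    HasDerivAt (mlF α B m n) (mlG α B m n y) y := by
  unfold mlF mlG
  set c : ℝ := α * ((m : ℝ) + 1 + n) with hcdef
  have hcpos : (0:ℝ) < c := by linarith
  have hΓpos : 0 < Real.Gamma c := Real.Gamma_pos_of_pos hcpos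
  have hΓ : Real.Gamma (c + 1) = c * Real.Gamma c := Real.Gamma_add_one (ne_of_gt hcpos)
  have h1 : HasDerivAt (fun x : ℝ => x ^ c) (c * y ^ (c - 1)) y :=
    Real.hasDerivAt_rpow_const (Or.inl hy.ne')
  have h2 : HasDerivAt (fun x : ℝ => (-B) ^ (m + 1 + n) * x ^ c / Real.Gamma (c + 1))
      ((-B) ^ (m + 1 + n) * (c * y ^ (c - 1)) / Real.Gamma (c + 1)) y :=
    (HasDerivAt.const_mul _ h1).div_const _
  have heq : (-B) ^ (m + 1 + n) * y ^ (c - 1) / Real.Gamma c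
      = (-B) ^ (m + 1 + n) * (c * y ^ (c - 1)) / Real.Gamma (c + 1) := by
    rw [hΓ]
    field_simp
  rw [heq]
  exact h2

lemma mlG_hasDeriv (α B : ℝ) (m n : ℕ) (y : ℝ) (hy : 0 < y)
    (hc : 2 < α * ((m : ℝ) + 1 + n)) :
    HasDerivAt (mlG α B m n) (mlH α B m n y) y := by
  unfold mlG mlH
  set c : ℝ := α * ((m : ℝ) + 1 + n) with hcdef
  have hcpos : (0:ℝ) < c - 1 := by linarith
  have hΓpos : 0 < Real.Gamma (c - 1) := Real.Gamma_pos_of_pos hcpos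
  have hΓ : Real.Gamma c = (c - 1) * Real.Gamma (c - 1) := by
    have h := Real.Gamma_add_one (ne_of_gt hcpos)
    rw [sub_add_cancel] at h
    exact h
  have h1 : HasDerivAt (fun x : ℝ => x ^ (c - 1)) ((c - 1) * y ^ (c - 2)) y := by
    have h := Real.hasDerivAt_rpow_const (x := y) (p := c - 1) (Or.inl hy.ne')
    have : c - 1 - 1 = c - 2 := by ring
    rwa [this] at h
  have h2 : HasDerivAt (fun x : ℝ => (-B) ^ (m + 1 + n) * x ^ (c - 1) / Real.Gamma c)
      ((-B) ^ (m + 1 + n) * ((c - 1) * y ^ (c - 2)) / Real.Gamma c) y :=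
    (HasDerivAt.const_mul _ h1).div_const _
  have heq : (-B) ^ (m + 1 + n) * y ^ (c - 2) / Real.Gamma (c - 1)
      = (-B) ^ (m + 1 + n) * ((c - 1) * y ^ (c - 2)) / Real.Gamma c := by
    rw [hΓ]
    field_simp
  rw [heq]
  exact h2

/-- For `mα > 2`, the tail `z(t) = ∑_{n=m+1}^∞ (−B)^n t^{αn}/Γ(αn+1)` is twice
differentiable at every `t ∈ (0,T]` and its second derivative equals the termwise
differentiated series `∑_{n=m+1}^∞ (−B)^n t^{αn−2}/Γ(αn−1)`. -/
theorem tail_second_deriv_termwise (α B T : ℝ) (m : ℕ)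
    (hα0 : 0 < α) (hα1 : α < 1) (hB : 0 < B) (hT : 0 < T)
    (hm : 0 < m) (hmα : 2 < m * α)
    (z : ℝ → ℝ)
    (hz : ∀ t : ℝ, z t = ∑' n : ℕ,
      (-B) ^ (m + 1 + n) * t ^ (α * ((m : ℝ) + 1 + n)) /
        Real.Gamma (α * ((m : ℝ) + 1 + n) + 1)) :
    ∀ t ∈ Set.Ioc (0 : ℝ) T,
      DifferentiableAt ℝ z t ∧ DifferentiableAt ℝ (deriv z) t ∧
        deriv (deriv z) t = ∑' n : ℕ,
          (-B) ^ (m + 1 + n) * t ^ (α * ((m : ℝ) + 1 + n) - 2) /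
            Real.Gamma (α * ((m : ℝ) + 1 + n) - 1) := by
  intro t htmem
  obtain ⟨ht0, htT⟩ := htmem
  set S : ℝ := max (T + 1) 1 with hSdef
  have hS1 : (1:ℝ) ≤ S := le_max_right _ _
  have hS0 : (0:ℝ) < S := lt_of_lt_of_le one_pos hS1
  set C : ℝ := B * S ^ α with hCdef
  have hC0 : 0 < C := by positivity
  have hc2 : ∀ n : ℕ, 2 < α * ((m : ℝ) + 1 + n) := by
    intro n
    have hn : (0:ℝ) ≤ n := n.cast_nonneg
    nlinarith [mul_pos hα0 (show (0:ℝ) < 1 + n by linarith)]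
  have hΓposF : ∀ n : ℕ, 0 < Real.Gamma (α * ((m : ℝ) + 1 + n) + 1) :=
    fun n => Real.Gamma_pos_of_pos (by linarith [hc2 n])
  have hΓposG : ∀ n : ℕ, 0 < Real.Gamma (α * ((m : ℝ) + 1 + n)) :=
    fun n => Real.Gamma_pos_of_pos (by linarith [hc2 n])
  have hΓposH : ∀ n : ℕ, 0 < Real.Gamma (α * ((m : ℝ) + 1 + n) - 1) :=
    fun n => Real.Gamma_pos_of_pos (by linarith [hc2 n])
  have hpow : ∀ n : ℕ, B ^ (m + 1 + n) * S ^ (α * ((m : ℝ) + 1 + n)) = C ^ (m + 1 + n) := by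
    intro n
    rw [hCdef, mul_pow]
    congr 1
    rw [← Real.rpow_natCast (S ^ α) (m + 1 + n), ← Real.rpow_mul hS0.le]
    congr 1
    push_cast
    ring
  have hsumF : Summable (fun n : ℕ => C ^ (m + 1 + n) / Real.Gamma (α * ((m : ℝ) + 1 + n) + 1)) :=
    summable_tail α C 1 m hα0 hC0 (fun n => by linarith [hc2 n])
  have hsumG : Summable (fun n : ℕ => C ^ (m + 1 + n) / Real.Gamma (α * ((m : ℝ) + 1 + n))) := by
    have := summable_tail α C 0 m hα0 hC0 (fun n => by
      simp only [add_zero]; linarith [hc2 n])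
    simpa using this
  have hsumH : Summable (fun n : ℕ => C ^ (m + 1 + n) / Real.Gamma (α * ((m : ℝ) + 1 + n) - 1)) := by
    have := summable_tail α C (-1) m hα0 hC0 (fun n => by linarith [hc2 n])
    simpa [sub_eq_add_neg] using this
  have hnormeq : ∀ (k : ℕ) (p G y : ℝ), 0 < y → 0 < G →
      ‖(-B) ^ k * y ^ p / G‖ = B ^ k * y ^ p / G := by
    intro k p G y hy hG
    rw [Real.norm_eq_abs, abs_div, abs_mul, abs_pow, abs_neg, abs_of_pos hB,
      abs_of_pos (Real.rpow_pos_of_pos hy p), abs_of_pos hG]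
  have hrb : ∀ (e c' y : ℝ), y ∈ Set.Ioo (0:ℝ) (T + 1) → 0 ≤ e → e ≤ c' → y ^ e ≤ S ^ c' := by
    intro e c' y hy he hec
    calc y ^ e ≤ S ^ e :=
          Real.rpow_le_rpow hy.1.le (le_trans hy.2.le (le_max_left _ _)) he
      _ ≤ S ^ c' := Real.rpow_le_rpow_of_exponent_le hS1 hec
  have hbF : ∀ (n : ℕ) (y : ℝ), y ∈ Set.Ioo (0:ℝ) (T + 1) →
      ‖mlF α B m n y‖ ≤ C ^ (m + 1 + n) / Real.Gamma (α * ((m : ℝ) + 1 + n) + 1) := by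
    intro n y hy
    have hΓ := hΓposF n
    unfold mlF
    rw [hnormeq _ _ _ _ hy.1 hΓ, ← hpow n]
    have h := hrb (α * ((m : ℝ) + 1 + n)) (α * ((m : ℝ) + 1 + n)) y hy
      (by linarith [hc2 n]) le_rfl
    gcongr
  have hbG : ∀ (n : ℕ) (y : ℝ), y ∈ Set.Ioo (0:ℝ) (T + 1) →
      ‖mlG α B m n y‖ ≤ C ^ (m + 1 + n) / Real.Gamma (α * ((m : ℝ) + 1 + n)) := by
    intro n y hy
    have hΓ := hΓposG n
    unfold mlG
    rw [hnormeq _ _ _ _ hy.1 hΓ, ← hpow n]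
    have h := hrb (α * ((m : ℝ) + 1 + n) - 1) (α * ((m : ℝ) + 1 + n)) y hy
      (by linarith [hc2 n]) (by linarith)
    gcongr
  have hbH : ∀ (n : ℕ) (y : ℝ), y ∈ Set.Ioo (0:ℝ) (T + 1) →
      ‖mlH α B m n y‖ ≤ C ^ (m + 1 + n) / Real.Gamma (α * ((m : ℝ) + 1 + n) - 1) := by
    intro n y hy
    have hΓ := hΓposH n
    unfold mlH
    rw [hnormeq _ _ _ _ hy.1 hΓ, ← hpow n]
    have h := hrb (α * ((m : ℝ) + 1 + n) - 2) (α * ((m : ℝ) + 1 + n)) y hy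
      (by linarith [hc2 n]) (by linarith)
    gcongr
  have hzeq : z = fun x => ∑' n, mlF α B m n x := by
    funext x
    rw [hz]
    rfl
  have hsopen : IsOpen (Set.Ioo (0:ℝ) (T + 1)) := isOpen_Ioo
  have hsconn : IsPreconnected (Set.Ioo (0:ℝ) (T + 1)) := isPreconnected_Ioo
  have hts : t ∈ Set.Ioo (0:ℝ) (T + 1) := ⟨ht0, by linarith⟩
  have hsumFt : Summable (fun n => mlF α B m n t) :=
    Summable.of_norm
      (Summable.of_nonneg_of_le (fun n => norm_nonneg _) (fun n => hbF n t hts) hsumF)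
  have hsumGt : Summable (fun n => mlG α B m n t) :=
    Summable.of_norm
      (Summable.of_nonneg_of_le (fun n => norm_nonneg _) (fun n => hbG n t hts) hsumG)
  have hD1 : ∀ y ∈ Set.Ioo (0:ℝ) (T + 1),
      HasDerivAt (fun x => ∑' n, mlF α B m n x) (∑' n, mlG α B m n y) y := by
    intro y hy
    exact hasDerivAt_tsum_of_isPreconnected hsumG hsopen hsconn
      (fun n u hu => mlF_hasDeriv α B m n u hu.1 (hc2 n))
      (fun n u hu => hbG n u hu) hts hsumFt hy
  have hD2 : ∀ y ∈ Set.Ioo (0:ℝ) (T + 1),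
      HasDerivAt (fun x => ∑' n, mlG α B m n x) (∑' n, mlH α B m n y) y := by
    intro y hy
    exact hasDerivAt_tsum_of_isPreconnected hsumH hsopen hsconn
      (fun n u hu => mlG_hasDeriv α B m n u hu.1 (hc2 n))
      (fun n u hu => hbH n u hu) hts hsumGt hy
  have hzt : HasDerivAt z (∑' n, mlG α B m n t) t := by
    rw [hzeq]
    exact hD1 t hts
  refine ⟨hzt.differentiableAt, ?_, ?_⟩
  all_goals
    have hev : deriv z =ᶠ[nhds t] (fun x => ∑' n, mlG α B m n x) := by
      filter_upwards [hsopen.mem_nhds hts] with y hy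
      rw [hzeq]
      exact (hD1 y hy).deriv
  · rw [hev.differentiableAt_iff]
    exact (hD2 t hts).differentiableAt
  · rw [hev.deriv_eq, (hD2 t hts).deriv]
    simp only [mlH]
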